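/- For 0 ≤ k < n, the quotient Sₖ₊₁/Sₖ of normalized elementary symmetric polynomials on the positive cone Γ₊ ⊂ ℝⁿ is inverse-concave: the map x ↦ -(Sₖ₊₁/Sₖ)(x₁⁻¹,...,xₙ⁻¹) is concave on Γ₊. Equivalently, ((Sₖ₊₁/Sₖ)(x₁⁻¹,...,xₙ⁻¹))⁻¹ = (S_{n-k}/S_{n-k-1})(x₁,...,xₙ) for x ∈ Γ₊. -/

import Mathlib

noncomputable section

/-- The open positive cone in `ℝⁿ`. -/
def posCone (n : ℕ) : Set (Fin n → ℝ) := {x | ∀ i, 0 < x i}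

/-- Coordinatewise inversion. -/
def invPt {n : ℕ} (x : Fin n → ℝ) : Fin n → ℝ := fun i => (x i)⁻¹

/-- The normalized `k`-th elementary symmetric polynomial. -/
def eS (n k : ℕ) (x : Fin n → ℝ) : ℝ :=
  ((n.choose k : ℝ))⁻¹ * ∑ A ∈ Finset.powersetCard k (Finset.univ : Finset (Fin n)), ∏ i ∈ A, x i

set_option linter.unusedSectionVars false

open Finset

section Aux
variable {ι : Type*} [DecidableEq ι]


def esym (s : Finset ι) (r : ℕ) (x : ι → ℝ) : ℝ :=
  ∑ A ∈ s.powersetCard r, ∏ i ∈ A, x i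

lemma esym_zero (s : Finset ι) (x : ι → ℝ) : esym s 0 x = 1 := by
  simp [esym]

lemma esym_one (s : Finset ι) (x : ι → ℝ) : esym s 1 x = ∑ i ∈ s, x i := by
  rw [esym, Finset.powersetCard_one, Finset.sum_map]
  simp

lemma esym_pos {s : Finset ι} {r : ℕ} (hr : r ≤ s.card) {x : ι → ℝ}
    (hx : ∀ i ∈ s, 0 < x i) : 0 < esym s r x := by
  refine Finset.sum_pos (fun A hA => ?_) (Finset.powersetCard_nonempty.2 hr)
  rw [Finset.mem_powersetCard] at hA
  exact Finset.prod_pos fun i hi => hx i (hA.1 hi)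

lemma esym_rec {s : Finset ι} {i : ι} (hi : i ∈ s) (r : ℕ) (x : ι → ℝ) :
    esym s (r+1) x = x i * esym (s.erase i) r x + esym (s.erase i) (r+1) x := by
  have h := Finset.powersetCard_succ_insert (Finset.notMem_erase i s) r
  rw [Finset.insert_erase hi] at h
  have hdisj : Disjoint ((s.erase i).powersetCard (r+1))
      (((s.erase i).powersetCard r).image (insert i)) := by
    rw [Finset.disjoint_right]
    rintro A hA hA'
    rw [Finset.mem_image] at hA
    obtain ⟨B, hB, rfl⟩ := hA
    have := (Finset.mem_powersetCard.1 hA').1 (Finset.mem_insert_self i B)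
    exact Finset.notMem_erase i s this
  have hinj : Set.InjOn (insert i) (((s.erase i).powersetCard r : Finset (Finset ι)) : Set (Finset ι)) := by
    intro A hA B hB hAB
    have hiA : i ∉ A := fun h => Finset.notMem_erase i s ((Finset.mem_powersetCard.1 hA).1 h)
    have hiB : i ∉ B := fun h => Finset.notMem_erase i s ((Finset.mem_powersetCard.1 hB).1 h)
    rw [← Finset.erase_insert hiA, ← Finset.erase_insert hiB, hAB]
  rw [esym, h, Finset.sum_union hdisj, Finset.sum_image hinj, add_comm]
  congr 1
  rw [esym, Finset.mul_sum]
  refine Finset.sum_congr rfl fun A hA => ?_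
  have hiA : i ∉ A := fun h => Finset.notMem_erase i s ((Finset.mem_powersetCard.1 hA).1 h)
  rw [Finset.prod_insert hiA]

lemma esym_euler (s : Finset ι) (r : ℕ) (x : ι → ℝ) :
    ((r : ℝ) + 1) * esym s (r+1) x = ∑ i ∈ s, x i * esym (s.erase i) r x := by
  have lhs : ∑ B ∈ s.powersetCard (r+1), ∑ i ∈ B, ∏ j ∈ B, x j
      = ((r : ℝ) + 1) * esym s (r+1) x := by
    rw [esym, Finset.mul_sum]
    refine Finset.sum_congr rfl fun B hB => ?_
    rw [Finset.sum_const, (Finset.mem_powersetCard.1 hB).2, nsmul_eq_mul]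
    push_cast
    ring
  rw [← lhs]
  have rhs : ∑ i ∈ s, x i * esym (s.erase i) r x
      = ∑ i ∈ s, ∑ A ∈ (s.erase i).powersetCard r, x i * ∏ j ∈ A, x j := by
    refine Finset.sum_congr rfl fun i _ => ?_
    rw [esym, Finset.mul_sum]
  rw [rhs, Finset.sum_sigma', Finset.sum_sigma']
  refine Finset.sum_nbij' (fun p => ⟨p.2, p.1.erase p.2⟩) (fun p => ⟨insert p.1 p.2, p.1⟩)
    ?_ ?_ ?_ ?_ ?_
  · rintro ⟨B, i⟩ hp
    rw [Finset.mem_sigma] at hp ⊢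
    obtain ⟨hB, hiB⟩ := hp
    rw [Finset.mem_powersetCard] at hB
    refine ⟨hB.1 hiB, ?_⟩
    rw [Finset.mem_powersetCard]
    exact ⟨Finset.erase_subset_erase i hB.1, by
      rw [Finset.card_erase_of_mem hiB, hB.2]; simp⟩
  · rintro ⟨i, A⟩ hp
    rw [Finset.mem_sigma] at hp ⊢
    obtain ⟨hi, hA⟩ := hp
    rw [Finset.mem_powersetCard] at hA
    have hiA : i ∉ A := fun h => Finset.notMem_erase i s (hA.1 h)
    constructor
    · rw [Finset.mem_powersetCard]
      refine ⟨?_, by rw [Finset.card_insert_of_notMem hiA, hA.2]⟩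
      intro j hj
      rcases Finset.mem_insert.1 hj with rfl | hj
      · exact hi
      · exact Finset.mem_of_mem_erase (hA.1 hj)
    · exact Finset.mem_insert_self i A
  · rintro ⟨B, i⟩ hp
    rw [Finset.mem_sigma] at hp
    simp only [Sigma.mk.inj_iff]
    exact ⟨Finset.insert_erase hp.2, HEq.rfl⟩
  · rintro ⟨i, A⟩ hp
    rw [Finset.mem_sigma] at hp
    have hiA : i ∉ A := fun h => Finset.notMem_erase i s ((Finset.mem_powersetCard.1 hp.2).1 h)
    simp only [Sigma.mk.inj_iff]
    exact ⟨trivial, heq_of_eq (Finset.erase_insert hiA)⟩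
  · rintro ⟨B, i⟩ hp
    rw [Finset.mem_sigma] at hp
    exact (Finset.mul_prod_erase B x hp.2).symm

lemma esym_smul (s : Finset ι) (r : ℕ) (c : ℝ) (x : ι → ℝ) :
    esym s r (fun i => c * x i) = c ^ r * esym s r x := by
  rw [esym, esym, Finset.mul_sum]
  refine Finset.sum_congr rfl fun A hA => ?_
  rw [Finset.prod_mul_distrib, Finset.prod_const, (Finset.mem_powersetCard.1 hA).2]

def harm (a b : ℝ) : ℝ := a * b / (a + b)

lemma harm_superadd {a b c d : ℝ} (ha : 0 < a) (hb : 0 < b) (hc : 0 < c) (hd : 0 < d) :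
    harm a b + harm c d ≤ harm (a + c) (b + d) := by
  unfold harm
  rw [div_add_div _ _ (by positivity) (by positivity),
    div_le_div_iff₀ (by positivity) (by positivity)]
  nlinarith [sq_nonneg (a * d - b * c), mul_pos ha hb, mul_pos hc hd, mul_pos ha hd,
    mul_pos hc hb, mul_pos (mul_pos ha hb) (mul_pos hc hd)]

lemma harm_mono {a b b' : ℝ} (ha : 0 < a) (hb : 0 < b) (h : b ≤ b') :
    harm a b ≤ harm a b' := by
  have hb' : 0 < b' := lt_of_lt_of_le hb h
  unfold harm
  rw [div_le_div_iff₀ (by positivity) (by positivity)]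
  nlinarith [sq_nonneg a]

lemma harm_eq {a A B : ℝ} (hB : B ≠ 0) (hden : a * B + A ≠ 0) (hden2 : a + A / B ≠ 0) :
    a * A / (a * B + A) = harm a (A / B) := by
  unfold harm
  field_simp

/-- Key representation: `E_{r+2}/E_{r+1} = (r+2)⁻¹ ∑_i harm(z i, E_{r+1}(ŝ i)/E_r(ŝ i))`. -/
lemma esym_ratio_rep {s : Finset ι} {r : ℕ} (hr : r + 2 ≤ s.card) {z : ι → ℝ}
    (hz : ∀ i ∈ s, 0 < z i) :
    esym s (r+2) z / esym s (r+1) z =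
      (((r : ℝ) + 2))⁻¹ * ∑ i ∈ s,
        harm (z i) (esym (s.erase i) (r+1) z / esym (s.erase i) r z) := by
  have hE1 : 0 < esym s (r+1) z := esym_pos (by omega) hz
  have heuler := esym_euler s (r+1) z
  push_cast at heuler
  have h2 : esym s (r+2) z / esym s (r+1) z =
      (((r : ℝ) + 2))⁻¹ * ∑ i ∈ s, z i * esym (s.erase i) (r+1) z / esym s (r+1) z := by
    rw [← Finset.sum_div, ← heuler]
    field_simp
    ring
  rw [h2]
  congr 1
  refine Finset.sum_congr rfl fun i hi => ?_
  have hzi : ∀ j ∈ s.erase i, 0 < z j := fun j hj => hz j (Finset.mem_of_mem_erase hj)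
  have hcard : r + 1 ≤ (s.erase i).card := by
    rw [Finset.card_erase_of_mem hi]; omega
  have hA : 0 < esym (s.erase i) (r+1) z := esym_pos hcard hzi
  have hB : 0 < esym (s.erase i) r z := esym_pos (by omega) hzi
  have hrec := esym_rec hi r z
  rw [hrec]
  exact harm_eq (ne_of_gt hB) (by rw [← hrec]; exact ne_of_gt hE1)
    (ne_of_gt (add_pos (hz i hi) (div_pos hA hB)))

/-- Marcus–Lopes superadditivity. -/
lemma ML (r : ℕ) : ∀ (s : Finset ι), r + 1 ≤ s.card → ∀ x y : ι → ℝ,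
    (∀ i ∈ s, 0 < x i) → (∀ i ∈ s, 0 < y i) →
    esym s (r+1) x / esym s r x + esym s (r+1) y / esym s r y ≤
      esym s (r+1) (fun i => x i + y i) / esym s r (fun i => x i + y i) := by
  induction r with
  | zero =>
    intro s _ x y _ _
    simp [esym_one, esym_zero, Finset.sum_add_distrib]
  | succ r ih =>
    intro s hcard x y hx hy
    have hxy : ∀ i ∈ s, 0 < x i + y i := fun i hi => add_pos (hx i hi) (hy i hi)
    rw [esym_ratio_rep hcard hx, esym_ratio_rep hcard hy, esym_ratio_rep hcard hxy,
      ← mul_add]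
    have hpos : (0:ℝ) < (r : ℝ) + 2 := by positivity
    refine mul_le_mul_of_nonneg_left ?_ (by positivity)
    rw [← Finset.sum_add_distrib]
    refine Finset.sum_le_sum fun i hi => ?_
    have hxi : ∀ j ∈ s.erase i, 0 < x j := fun j hj => hx j (Finset.mem_of_mem_erase hj)
    have hyi : ∀ j ∈ s.erase i, 0 < y j := fun j hj => hy j (Finset.mem_of_mem_erase hj)
    have hcard' : r + 1 ≤ (s.erase i).card := by
      rw [Finset.card_erase_of_mem hi]; omega
    have hFx : 0 < esym (s.erase i) (r+1) x / esym (s.erase i) r x :=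
      div_pos (esym_pos hcard' hxi) (esym_pos (by omega) hxi)
    have hFy : 0 < esym (s.erase i) (r+1) y / esym (s.erase i) r y :=
      div_pos (esym_pos hcard' hyi) (esym_pos (by omega) hyi)
    calc harm (x i) (esym (s.erase i) (r+1) x / esym (s.erase i) r x)
          + harm (y i) (esym (s.erase i) (r+1) y / esym (s.erase i) r y)
        ≤ harm (x i + y i) (esym (s.erase i) (r+1) x / esym (s.erase i) r x
            + esym (s.erase i) (r+1) y / esym (s.erase i) r y) :=
          harm_superadd (hx i hi) hFx (hy i hi) hFy
      _ ≤ harm (x i + y i) (esym (s.erase i) (r+1) (fun j => x j + y j)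
            / esym (s.erase i) r (fun j => x j + y j)) :=
          harm_mono (hxy i hi) (by positivity)
            (ih (s.erase i) hcard' x y hxi hyi)

end Aux

section Aux2
lemma posCone_convex (n : ℕ) : Convex ℝ (posCone n) := by
  intro x hx y hy a b ha hb hab i
  rcases eq_or_lt_of_le ha with rfl | ha'
  · simpa [(by linarith : b = 1)] using hy i
  · exact add_pos_of_pos_of_nonneg (by simpa using mul_pos ha' (hx i))
      (mul_nonneg hb (hy i).le)

lemma esym_homog {n : ℕ} (r : ℕ) (c : ℝ) (hc : 0 < c) (x : Fin n → ℝ)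
    (hx : x ∈ posCone n) (hrn : r + 1 ≤ n) :
    esym univ (r+1) (c • x) / esym univ r (c • x)
      = c * (esym univ (r+1) x / esym univ r x) := by
  have h1 : (c • x) = fun i => c * x i := by funext i; simp
  rw [h1, esym_smul, esym_smul, pow_succ]
  have hr : 0 < esym (univ : Finset (Fin n)) r x :=
    esym_pos (by simpa using by omega) (fun i _ => hx i)
  field_simp

lemma ML_concaveOn {n r : ℕ} (hrn : r + 1 ≤ n) :
    ConcaveOn ℝ (posCone n)
      (fun x => esym univ (r+1) x / esym univ r x) := by
  have hcardn : (univ : Finset (Fin n)).card = n := by simp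
  refine ⟨posCone_convex n, fun x hx y hy a b ha hb hab => ?_⟩
  rcases eq_or_lt_of_le ha with rfl | ha'
  · have hb1 : b = 1 := by linarith
    simp [hb1]
  rcases eq_or_lt_of_le hb with rfl | hb'
  · have ha1 : a = 1 := by linarith
    simp [ha1]
  have hax : (a • x) ∈ posCone n := fun i => by
    simpa using mul_pos ha' (hx i)
  have hby : (b • y) ∈ posCone n := fun i => by
    simpa using mul_pos hb' (hy i)
  have key := ML r (univ : Finset (Fin n)) (by omega) (a • x) (b • y)
    (fun i _ => hax i) (fun i _ => hby i)
  have hsum : (fun i => (a • x) i + (b • y) i) = a • x + b • y := by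
    funext i; simp
  rw [hsum] at key
  calc a • (esym univ (r+1) x / esym univ r x) + b • (esym univ (r+1) y / esym univ r y)
      = esym univ (r+1) (a • x) / esym univ r (a • x)
        + esym univ (r+1) (b • y) / esym univ r (b • y) := by
        rw [esym_homog r a ha' x hx hrn, esym_homog r b hb' y hy hrn]
        simp [smul_eq_mul]
    _ ≤ _ := key

lemma concaveOn_congr' {E : Type*} [AddCommMonoid E] [Module ℝ E] {S : Set E} {f g : E → ℝ}
    (h : ConcaveOn ℝ S f) (he : ∀ x ∈ S, f x = g x) : ConcaveOn ℝ S g := by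
  refine ⟨h.1, fun x hx y hy a b ha hb hab => ?_⟩
  rw [← he _ hx, ← he _ hy, ← he _ (h.1 hx hy ha hb hab)]
  exact h.2 hx hy ha hb hab

lemma convexOn_congr' {E : Type*} [AddCommMonoid E] [Module ℝ E] {S : Set E} {f g : E → ℝ}
    (h : ConvexOn ℝ S f) (he : ∀ x ∈ S, f x = g x) : ConvexOn ℝ S g := by
  refine ⟨h.1, fun x hx y hy a b ha hb hab => ?_⟩
  rw [← he _ hx, ← he _ hy, ← he _ (h.1 hx hy ha hb hab)]
  exact h.2 hx hy ha hb hab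

lemma convexOn_inv_of_concaveOn {E : Type*} [AddCommMonoid E] [Module ℝ E] {S : Set E}
    {f : E → ℝ} (h : ConcaveOn ℝ S f) (hpos : ∀ x ∈ S, 0 < f x) :
    ConvexOn ℝ S (fun x => (f x)⁻¹) := by
  refine ⟨h.1, fun x hx y hy a b ha hb hab => ?_⟩
  have hz := h.1 hx hy ha hb hab
  have hfx := hpos x hx
  have hfy := hpos y hy
  have hfz := hpos _ hz
  have h1 := h.2 hx hy ha hb hab
  simp only [smul_eq_mul] at h1 ⊢
  have hR : 0 < a * (f x)⁻¹ + b * (f y)⁻¹ := by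
    rcases eq_or_lt_of_le ha with rfl | ha'
    · have : b = 1 := by linarith
      simp [this]; positivity
    · exact add_pos_of_pos_of_nonneg (by positivity) (by positivity)
  have key : 1 ≤ (a * f x + b * f y) * (a * (f x)⁻¹ + b * (f y)⁻¹) := by
    have hfx0 : f x ≠ 0 := ne_of_gt hfx
    have hfy0 : f y ≠ 0 := ne_of_gt hfy
    rw [← sub_nonneg]
    field_simp
    rw [zero_mul, zero_mul]
    have habsq : (a + b) * (a + b) = 1 := by rw [hab]; ring
    nlinarith [mul_nonneg (mul_nonneg ha hb) (sq_nonneg (f x - f y)), mul_pos hfx hfy]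
  have key2 : 1 ≤ f (a • x + b • y) * (a * (f x)⁻¹ + b * (f y)⁻¹) :=
    le_trans key (mul_le_mul_of_nonneg_right h1 hR.le)
  calc (f (a • x + b • y))⁻¹ = (f (a • x + b • y))⁻¹ * 1 := (mul_one _).symm
    _ ≤ (f (a • x + b • y))⁻¹ * (f (a • x + b • y) * (a * (f x)⁻¹ + b * (f y)⁻¹)) :=
        mul_le_mul_of_nonneg_left key2 (by positivity)
    _ = a * (f x)⁻¹ + b * (f y)⁻¹ := by
        rw [← mul_assoc, inv_mul_cancel₀ (ne_of_gt hfz), one_mul]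


end Aux2

lemma esym_inv_compl {n j : ℕ} (hj : j ≤ n) (x : Fin n → ℝ) (hx : ∀ i, 0 < x i) :
    esym univ j (invPt x) = (∏ i, x i)⁻¹ * esym univ (n - j) x := by
  rw [esym, esym, Finset.mul_sum]
  refine Finset.sum_nbij' (fun A => univ \ A) (fun A => univ \ A) ?_ ?_ ?_ ?_ ?_
  · intro A hA
    rw [Finset.mem_powersetCard] at hA ⊢
    refine ⟨Finset.subset_univ _, ?_⟩
    rw [Finset.card_sdiff_of_subset (Finset.subset_univ A), Finset.card_univ, Fintype.card_fin, hA.2]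
  · intro A hA
    rw [Finset.mem_powersetCard] at hA ⊢
    refine ⟨Finset.subset_univ _, ?_⟩
    rw [Finset.card_sdiff_of_subset (Finset.subset_univ A), Finset.card_univ, Fintype.card_fin, hA.2]
    omega
  · intro A hA
    show univ \ (univ \ A) = A
    rw [Finset.sdiff_sdiff_self_left, Finset.univ_inter]
  · intro A hA
    show univ \ (univ \ A) = A
    rw [Finset.sdiff_sdiff_self_left, Finset.univ_inter]
  · intro A hA
    have hA0 : (0:ℝ) < ∏ i ∈ A, x i := Finset.prod_pos fun i _ => hx i
    have hU0 : (0:ℝ) < ∏ i, x i := Finset.prod_pos fun i _ => hx i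
    have hsd : (∏ i ∈ univ \ A, x i) * ∏ i ∈ A, x i = ∏ i, x i :=
      Finset.prod_sdiff (Finset.subset_univ A)
    have : ∏ i ∈ A, invPt x i = (∏ i ∈ A, x i)⁻¹ := by
      simp [invPt]
    rw [this]
    field_simp
    linarith [hsd]

lemma eS_esym (n r : ℕ) (x : Fin n → ℝ) :
    eS n r x = ((n.choose r : ℝ))⁻¹ * esym univ r x := rfl

lemma eS_pos {n r : ℕ} (hr : r ≤ n) {x : Fin n → ℝ} (hx : x ∈ posCone n) :
    0 < eS n r x := by
  rw [eS_esym]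
  have h1 : (0:ℝ) < (n.choose r : ℝ) := by
    exact_mod_cast Nat.choose_pos hr
  have h2 : 0 < esym (univ : Finset (Fin n)) r x :=
    esym_pos (by simpa using hr) (fun i _ => hx i)
  positivity

lemma eS_inv_compl {n j : ℕ} (hj : j ≤ n) (x : Fin n → ℝ) (hx : x ∈ posCone n) :
    eS n j (invPt x) = (∏ i, x i)⁻¹ * eS n (n - j) x := by
  rw [eS_esym, eS_esym, esym_inv_compl hj x hx, Nat.choose_symm hj]
  ring

lemma eS_ratio_inv {n k : ℕ} (hk : k < n) (x : Fin n → ℝ) (hx : x ∈ posCone n) :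
    eS n (k + 1) (invPt x) / eS n k (invPt x) = eS n (n - k - 1) x / eS n (n - k) x := by
  have hP : (0:ℝ) < ∏ i, x i := Finset.prod_pos fun i _ => hx i
  rw [eS_inv_compl (by omega : k + 1 ≤ n) x hx, eS_inv_compl (by omega : k ≤ n) x hx,
    (by omega : n - (k + 1) = n - k - 1)]
  rw [mul_div_mul_left _ _ (by positivity)]

theorem stmt8 {n k : ℕ} (hk : k < n) :
    ConcaveOn ℝ (posCone n)
      (fun x => -(eS n (k + 1) (invPt x) / eS n k (invPt x))) ∧
    ∀ x ∈ posCone n,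
      (eS n (k + 1) (invPt x) / eS n k (invPt x))⁻¹
        = eS n (n - k) x / eS n (n - k - 1) x := by
  set r := n - k - 1 with hr
  have hr1 : n - k = r + 1 := by omega
  have hrn : r + 1 ≤ n := by omega
  constructor
  · -- concavity
    have hML : ConcaveOn ℝ (posCone n)
        (fun x => esym univ (r+1) x / esym univ r x) := ML_concaveOn hrn
    have hposf : ∀ x ∈ posCone n, 0 < esym univ (r+1) x / esym univ r x := by
      intro x hx
      exact div_pos (esym_pos (by simpa using hrn) (fun i _ => hx i))
        (esym_pos (by simp; omega) (fun i _ => hx i))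
    have hconv : ConvexOn ℝ (posCone n)
        (fun x => (esym univ (r+1) x / esym univ r x)⁻¹) :=
      convexOn_inv_of_concaveOn hML hposf
    have hc : (0:ℝ) ≤ (n.choose (r+1) : ℝ) / (n.choose r : ℝ) := by positivity
    have hconv2 : ConvexOn ℝ (posCone n)
        (((n.choose (r+1) : ℝ) / (n.choose r : ℝ)) •
          fun x => (esym univ (r+1) x / esym univ r x)⁻¹) := hconv.smul hc
    have hcc : ConcaveOn ℝ (posCone n)
        (-(((n.choose (r+1) : ℝ) / (n.choose r : ℝ)) •
          fun x => (esym univ (r+1) x / esym univ r x)⁻¹)) := hconv2.neg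
    refine concaveOn_congr' hcc ?_
    intro x hx
    have hch1 : (0:ℝ) < (n.choose (r+1) : ℝ) := by exact_mod_cast Nat.choose_pos hrn
    have hch0 : (0:ℝ) < (n.choose r : ℝ) := by
      exact_mod_cast Nat.choose_pos (by omega : r ≤ n)
    have hE1 : 0 < esym (univ : Finset (Fin n)) (r+1) x :=
      esym_pos (by simpa using hrn) (fun i _ => hx i)
    have hE0 : 0 < esym (univ : Finset (Fin n)) r x :=
      esym_pos (by simp; omega) (fun i _ => hx i)
    have key : eS n (k + 1) (invPt x) / eS n k (invPt x)
        = ((n.choose (r+1) : ℝ) / (n.choose r : ℝ)) *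
          (esym univ (r+1) x / esym univ r x)⁻¹ := by
      rw [eS_ratio_inv hk x hx, ← hr, hr1, eS_esym, eS_esym, inv_div]
      field_simp
    simp only [Pi.neg_apply, Pi.smul_apply, smul_eq_mul]
    rw [key]
  · -- the identity
    intro x hx
    rw [eS_ratio_inv hk x hx, inv_div]
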